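/- (Pareto optimality factorizes over the two subgames.) Let u be any function assigning a real number u_t(a1, a2) to each arrival pair t ∈ T and each pair of actions (a1, a2) (no order assumptions on u are needed). A strategy profile s is Pareto optimal over T if and only if s is Pareto optimal over T1 and s is Pareto optimal over T2. -/

import Mathlib

/-- The two actions: `c` (canteen) and `o` (office). -/
inductive Act : Type
  | c : Act
  | o : Act
deriving DecidableEq

open Act

/-- The set of arrival pairs
`T = {(k, k+1) : kmin ≤ k ≤ kmax - 1} ∪ {(k, k-1) : kmin + 1 ≤ k ≤ kmax}`. -/
noncomputable def T (kmin kmax : ℤ) : Finset (ℤ × ℤ) :=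
  ((Finset.Icc kmin (kmax - 1)).image (fun k => (k, k + 1))) ∪
  ((Finset.Icc (kmin + 1) kmax).image (fun k => (k, k - 1)))

/-- Subgame `T1 = {(t1,t2) ∈ T : t1 ≡ kmin (mod 2)}`. -/
noncomputable def T1 (kmin kmax : ℤ) : Finset (ℤ × ℤ) :=
  (T kmin kmax).filter (fun t => t.1 % 2 = kmin % 2)

/-- Subgame `T2 = {(t1,t2) ∈ T : t2 ≡ kmin (mod 2)}`. -/
noncomputable def T2 (kmin kmax : ℤ) : Finset (ℤ × ℤ) :=
  (T kmin kmax).filter (fun t => t.2 % 2 = kmin % 2)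

/-- The expected utility of profile `s` over a set `S` of arrival pairs:
`EU_S(s) = (1/|S|) · Σ_{(t1,t2) ∈ S} u_{(t1,t2)}(s_1(t1), s_2(t2))`. -/
noncomputable def EU (u : ℤ × ℤ → Act → Act → ℝ) (s : (ℤ → Act) × (ℤ → Act))
    (S : Finset (ℤ × ℤ)) : ℝ :=
  (∑ t ∈ S, u t (s.1 t.1) (s.2 t.2)) / S.card

/-- `s` is Pareto optimal over `S` if no profile `s'` has `EU_S(s') > EU_S(s)`. -/
def ParetoOptimal (u : ℤ × ℤ → Act → Act → ℝ) (S : Finset (ℤ × ℤ))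
    (s : (ℤ → Act) × (ℤ → Act)) : Prop :=
  ¬ ∃ s' : (ℤ → Act) × (ℤ → Act), EU u s' S > EU u s S

/-- `u` satisfies conditions (U1) and (U2) on the arrival pairs of `T`. -/
def SatisfiesU1U2 (kmin kmax N : ℤ) (u : ℤ × ℤ → Act → Act → ℝ) : Prop :=
  ∀ t ∈ T kmin kmax,
    (t.1 < N ∧ t.2 < N →
      u t c c > u t o o ∧ u t o o > u t c o ∧ u t c o = u t o c) ∧
    (N ≤ t.1 ∨ N ≤ t.2 →
      u t o o > u t c o ∧ u t c o = u t o c ∧ u t o c = u t c c)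

/-- `u` is uniform with values `A > B > C` (the order is assumed separately). -/
def Uniform (kmin kmax N : ℤ) (u : ℤ × ℤ → Act → Act → ℝ) (A B C : ℝ) : Prop :=
  ∀ t ∈ T kmin kmax,
    (t.1 < N ∧ t.2 < N →
      u t c c = A ∧ u t o o = B ∧ u t c o = C ∧ u t o c = C) ∧
    (N ≤ t.1 ∨ N ≤ t.2 →
      u t o o = B ∧ u t c c = C ∧ u t c o = C ∧ u t o c = C)

/-- The cut-off strategy with cut-off `m`: canteen iff arriving strictly before `m`. -/
def cutoff (m : ℤ) : ℤ → Act := fun k => if k < m then c else o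

/-- The all-office strategy. -/
def allOffice : ℤ → Act := fun _ => o

lemma memT_adj {kmin kmax : ℤ} {t : ℤ × ℤ} (ht : t ∈ T kmin kmax) :
    t.2 = t.1 + 1 ∨ t.2 = t.1 - 1 := by
  simp only [T, Finset.mem_union, Finset.mem_image, Finset.mem_Icc] at ht
  rcases ht with ⟨k, _, hk⟩ | ⟨k, _, hk⟩ <;> subst hk <;> [left; right] <;> simp

lemma T2_eq (kmin kmax : ℤ) :
    T2 kmin kmax = (T kmin kmax).filter (fun t => ¬ t.1 % 2 = kmin % 2) := by
  unfold T2
  apply Finset.filter_congr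
  intro t ht
  rcases memT_adj ht with h | h <;> omega

lemma sum_split (kmin kmax : ℤ) (f : ℤ × ℤ → ℝ) :
    ∑ t ∈ T kmin kmax, f t = (∑ t ∈ T1 kmin kmax, f t) + ∑ t ∈ T2 kmin kmax, f t := by
  rw [T2_eq, T1, Finset.sum_filter_add_sum_filter_not]

lemma card_split (kmin kmax : ℤ) :
    (T kmin kmax).card = (T1 kmin kmax).card + (T2 kmin kmax).card := by
  rw [T2_eq, T1, Finset.card_filter_add_card_filter_not]

lemma T1_nonempty {kmin kmax N : ℤ} (h1 : kmin < N) (h2 : N ≤ kmax) :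
    0 < (T1 kmin kmax).card := by
  rw [Finset.card_pos]
  refine ⟨(kmin, kmin + 1), ?_⟩
  simp only [T1, T, Finset.mem_filter, Finset.mem_union, Finset.mem_image, Finset.mem_Icc]
  exact ⟨Or.inl ⟨kmin, by omega, rfl⟩, trivial⟩

lemma T2_nonempty {kmin kmax N : ℤ} (h1 : kmin < N) (h2 : N ≤ kmax) :
    0 < (T2 kmin kmax).card := by
  rw [Finset.card_pos]
  refine ⟨(kmin + 1, kmin), ?_⟩
  simp only [T2, T, Finset.mem_filter, Finset.mem_union, Finset.mem_image, Finset.mem_Icc]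
  exact ⟨Or.inr ⟨kmin + 1, by omega, by simp⟩, trivial⟩

lemma EU_lt_iff (u : ℤ × ℤ → Act → Act → ℝ) (s s' : (ℤ → Act) × (ℤ → Act))
    (S : Finset (ℤ × ℤ)) (hS : 0 < S.card) :
    EU u s S < EU u s' S ↔
      (∑ t ∈ S, u t (s.1 t.1) (s.2 t.2)) < ∑ t ∈ S, u t (s'.1 t.1) (s'.2 t.2) := by
  unfold EU
  rw [div_lt_div_iff_of_pos_right (by exact_mod_cast hS)]

/-- Pareto optimality factorizes over the two subgames. -/
theorem stmt_6 (kmin kmax N : ℤ) (h1 : kmin < N) (h2 : N ≤ kmax)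
    (u : ℤ × ℤ → Act → Act → ℝ) (s : (ℤ → Act) × (ℤ → Act)) :
    ParetoOptimal u (T kmin kmax) s ↔
    (ParetoOptimal u (T1 kmin kmax) s ∧ ParetoOptimal u (T2 kmin kmax) s) := by
  have hc1 := T1_nonempty h1 h2
  have hc2 := T2_nonempty h1 h2
  have hc : 0 < (T kmin kmax).card := by rw [card_split]; omega
  constructor
  · intro hP
    constructor
    · rintro ⟨s', hs'⟩
      apply hP
      refine ⟨(fun k => if k % 2 = kmin % 2 then s'.1 k else s.1 k,
               fun k => if k % 2 = kmin % 2 then s.2 k else s'.2 k), ?_⟩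
      rw [gt_iff_lt, EU_lt_iff _ _ _ _ hc,
          sum_split kmin kmax (fun t => u t (s.1 t.1) (s.2 t.2)), sum_split]
      have e1 : ∑ t ∈ T1 kmin kmax,
            u t (if t.1 % 2 = kmin % 2 then s'.1 t.1 else s.1 t.1)
              (if t.2 % 2 = kmin % 2 then s.2 t.2 else s'.2 t.2)
          = ∑ t ∈ T1 kmin kmax, u t (s'.1 t.1) (s'.2 t.2) := by
        refine Finset.sum_congr rfl fun t ht => ?_
        simp only [T1, Finset.mem_filter] at ht
        have h2' : ¬ t.2 % 2 = kmin % 2 := by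
          rcases memT_adj ht.1 with h | h <;> omega
        simp [ht.2, h2']
      have e2 : ∑ t ∈ T2 kmin kmax,
            u t (if t.1 % 2 = kmin % 2 then s'.1 t.1 else s.1 t.1)
              (if t.2 % 2 = kmin % 2 then s.2 t.2 else s'.2 t.2)
          = ∑ t ∈ T2 kmin kmax, u t (s.1 t.1) (s.2 t.2) := by
        refine Finset.sum_congr rfl fun t ht => ?_
        simp only [T2, Finset.mem_filter] at ht
        have h1' : ¬ t.1 % 2 = kmin % 2 := by
          rcases memT_adj ht.1 with h | h <;> omega
        simp [ht.2, h1']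
      rw [e1, e2]
      have := (EU_lt_iff u s s' (T1 kmin kmax) hc1).mp hs'
      linarith
    · rintro ⟨s', hs'⟩
      apply hP
      refine ⟨(fun k => if k % 2 = kmin % 2 then s.1 k else s'.1 k,
               fun k => if k % 2 = kmin % 2 then s'.2 k else s.2 k), ?_⟩
      rw [gt_iff_lt, EU_lt_iff _ _ _ _ hc,
          sum_split kmin kmax (fun t => u t (s.1 t.1) (s.2 t.2)), sum_split]
      have e1 : ∑ t ∈ T1 kmin kmax,
            u t (if t.1 % 2 = kmin % 2 then s.1 t.1 else s'.1 t.1)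
              (if t.2 % 2 = kmin % 2 then s'.2 t.2 else s.2 t.2)
          = ∑ t ∈ T1 kmin kmax, u t (s.1 t.1) (s.2 t.2) := by
        refine Finset.sum_congr rfl fun t ht => ?_
        simp only [T1, Finset.mem_filter] at ht
        have h2' : ¬ t.2 % 2 = kmin % 2 := by
          rcases memT_adj ht.1 with h | h <;> omega
        simp [ht.2, h2']
      have e2 : ∑ t ∈ T2 kmin kmax,
            u t (if t.1 % 2 = kmin % 2 then s.1 t.1 else s'.1 t.1)
              (if t.2 % 2 = kmin % 2 then s'.2 t.2 else s.2 t.2)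
          = ∑ t ∈ T2 kmin kmax, u t (s'.1 t.1) (s'.2 t.2) := by
        refine Finset.sum_congr rfl fun t ht => ?_
        simp only [T2, Finset.mem_filter] at ht
        have h1' : ¬ t.1 % 2 = kmin % 2 := by
          rcases memT_adj ht.1 with h | h <;> omega
        simp [ht.2, h1']
      rw [e1, e2]
      have := (EU_lt_iff u s s' (T2 kmin kmax) hc2).mp hs'
      linarith
  · rintro ⟨hP1, hP2⟩ ⟨s', hs'⟩
    rw [gt_iff_lt, EU_lt_iff _ _ _ _ hc,
        sum_split kmin kmax (fun t => u t (s.1 t.1) (s.2 t.2)),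
        sum_split kmin kmax (fun t => u t (s'.1 t.1) (s'.2 t.2))] at hs'
    rcases lt_or_ge (∑ t ∈ T1 kmin kmax, u t (s.1 t.1) (s.2 t.2))
        (∑ t ∈ T1 kmin kmax, u t (s'.1 t.1) (s'.2 t.2)) with h | h
    · exact hP1 ⟨s', (EU_lt_iff u s s' (T1 kmin kmax) hc1).mpr h⟩
    · refine hP2 ⟨s', (EU_lt_iff u s s' (T2 kmin kmax) hc2).mpr ?_⟩
      linarith
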